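/- In the setting of m even binary sources with [X1;...;Xm] = L·[Y1;...;Ym] as above, the subspace W = span(X1+...+Xm) is contained in W^(1) = span(X1+X2, X3+X4, ..., X_{m-1}+X_m) = span(Y2, Y4, ..., Y_m), and the normalized entropy of W^(1) equals h(p): H(Y2,Y4,...,Y_m)/(m/2) = h(p); consequently the selected-subspace sum rate m·h(p) is strictly smaller than both the common-code sum rate m·H(Y2+Y4+...+Y_m) and the Slepian-Wolf sum rate (m/2)(1+h(p)). -/

import Mathlib

open scoped BigOperators

open Classical in
/-- Base-2 Shannon entropy of the random variable `f` on the finite probability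
space `(Ω, p)`. -/
noncomputable def mapEnt {Ω β : Type*} [Fintype Ω] [Fintype β]
    (p : Ω → ℝ) (f : Ω → β) : ℝ :=
  ∑ b : β, -((∑ ω ∈ Finset.univ.filter (fun ω => f ω = b), p ω) *
      Real.logb 2 (∑ ω ∈ Finset.univ.filter (fun ω => f ω = b), p ω))

open Classical in
/-- Entropy of a subspace `U` of the space of `F`-valued random variables on `Ω`:
the joint entropy of the collection of all random variables in `U` (equivalently,
of any generating set). -/
noncomputable def subEnt {F Ω : Type*} [Field F] [Fintype F] [Fintype Ω]
    (p : Ω → ℝ) (U : Submodule F (Ω → F)) : ℝ :=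
  mapEnt p (fun ω => (fun u : U => (u : Ω → F) ω))

/-- Normalized conditional entropy `H_N(U|W) = (H(W+U) - H(W)) / (dim(W+U) - dim W)`. -/
noncomputable def condNE {F Ω : Type*} [Field F] [Fintype F] [Fintype Ω]
    (p : Ω → ℝ) (U W : Submodule F (Ω → F)) : ℝ :=
  (subEnt p (W ⊔ U) - subEnt p W) /
    ((Module.finrank F ↥(W ⊔ U) : ℝ) - (Module.finrank F ↥W : ℝ))

/-- Binary entropy function (in bits). -/
noncomputable def binH (p : ℝ) : ℝ :=
  -(p * Real.logb 2 p) - (1 - p) * Real.logb 2 (1 - p)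

/-- The pmf of a `Bernoulli(p)` random variable with values in `F_2`. -/
noncomputable def bern (p : ℝ) (b : ZMod 2) : ℝ := if b = 1 then p else 1 - p

/-- The joint pmf of the independent sources `Y1,...,Y_{2k}` (sample space: the vector
of `Y`-values), `Y i ~ Bern(1/2)` for `i` odd (`0`-indexed even) and `Y i ~ Bern(p)`
for `i` even (`0`-indexed odd). -/
noncomputable def srcP (k : ℕ) (p : ℝ) : (Fin (2 * k) → ZMod 2) → ℝ :=
  fun ω => ∏ j : Fin (2 * k), bern (if (j : ℕ) % 2 = 0 then 1 / 2 else p) (ω j)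

open Classical in
/-- The source `X i = Y1 + ... + Y_i` (i.e. `[X1;...;Xm] = L·[Y1;...;Ym]` with `L`
lower-triangular all-ones), as a random variable on the sample space of `Y`-values. -/
noncomputable def Xrv (k : ℕ) (i : Fin (2 * k)) : (Fin (2 * k) → ZMod 2) → ZMod 2 :=
  fun ω => ∑ j ∈ Finset.univ.filter (fun j : Fin (2 * k) => (j : ℕ) ≤ (i : ℕ)), ω j

private def oddProj (k : ℕ) (ω : Fin (2 * k) → ZMod 2) : Fin k → ZMod 2 :=
  fun j => ω ⟨2 * (j : ℕ) + 1, by have := j.2; omega⟩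

private def glue (k : ℕ) (v w : Fin k → ZMod 2) : Fin (2 * k) → ZMod 2 :=
  fun i => if (i : ℕ) % 2 = 1 then v ⟨(i : ℕ) / 2, by omega⟩ else w ⟨(i : ℕ) / 2, by omega⟩

private def pairEquiv (k : ℕ) : Fin k × Fin 2 ≃ Fin (2 * k) where
  toFun x := ⟨2 * (x.1 : ℕ) + (x.2 : ℕ), by omega⟩
  invFun i := (⟨(i : ℕ) / 2, by omega⟩, ⟨(i : ℕ) % 2, by omega⟩)
  left_inv x := by
    obtain ⟨⟨a, ha⟩, ⟨b, hb⟩⟩ := x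
    have h1 : (2 * a + b) / 2 = a := by omega
    have h2 : (2 * a + b) % 2 = b := by omega
    simp only [Prod.mk.injEq, Fin.mk.injEq]
    exact ⟨h1, h2⟩
  right_inv i := by
    apply Fin.ext
    show 2 * ((i : ℕ) / 2) + (i : ℕ) % 2 = (i : ℕ)
    omega

private lemma glue_odd (k : ℕ) (v w : Fin k → ZMod 2) (j : Fin k) :
    glue k v w ⟨2 * (j : ℕ) + 1, by have := j.2; omega⟩ = v j := by
  unfold glue
  rw [if_pos (by show (2 * (j:ℕ) + 1) % 2 = 1; omega)]
  congr 1
  apply Fin.ext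
  show (2 * (j:ℕ) + 1) / 2 = (j:ℕ)
  omega

private lemma glue_even (k : ℕ) (v w : Fin k → ZMod 2) (j : Fin k) :
    glue k v w ⟨2 * (j : ℕ), by have := j.2; omega⟩ = w j := by
  unfold glue
  rw [if_neg (by show ¬ (2 * (j:ℕ)) % 2 = 1; omega)]
  congr 1
  apply Fin.ext
  show (2 * (j:ℕ)) / 2 = (j:ℕ)
  omega

private lemma srcP_glue (k : ℕ) (p : ℝ) (v w : Fin k → ZMod 2) :
    srcP k p (glue k v w) = (∏ j, bern p (v j)) * ∏ j, bern (1/2) (w j) := by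
  unfold srcP
  rw [← (pairEquiv k).prod_comp
    (fun i => bern (if (i : ℕ) % 2 = 0 then 1 / 2 else p) (glue k v w i))]
  rw [Fintype.prod_prod_type]
  have key : ∀ a : Fin k,
      (∏ b : Fin 2, bern (if ((pairEquiv k (a, b) : Fin (2*k)) : ℕ) % 2 = 0 then 1 / 2 else p)
        (glue k v w (pairEquiv k (a, b))))
      = bern (1/2) (w a) * bern p (v a) := by
    intro a
    rw [Fin.prod_univ_two]
    have h0 : pairEquiv k (a, 0) = ⟨2 * (a : ℕ), by omega⟩ := rfl
    have h1 : pairEquiv k (a, 1) = ⟨2 * (a : ℕ) + 1, by omega⟩ := rfl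
    rw [h0, h1, glue_even, glue_odd]
    rw [if_pos (by show (2 * (a:ℕ)) % 2 = 0; omega),
        if_neg (by show ¬ (2 * (a:ℕ) + 1) % 2 = 0; omega)]
  calc (∏ a : Fin k, ∏ b : Fin 2,
        bern (if ((pairEquiv k (a, b) : Fin (2*k)) : ℕ) % 2 = 0 then 1 / 2 else p)
          (glue k v w (pairEquiv k (a, b))))
      = ∏ a : Fin k, (bern (1/2) (w a) * bern p (v a)) := Finset.prod_congr rfl fun a _ => key a
    _ = (∏ j, bern p (v j)) * ∏ j, bern (1/2) (w j) := by
        rw [Finset.prod_mul_distrib, mul_comm]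

private lemma zmod2_sum (F : ZMod 2 → ℝ) : ∑ b : ZMod 2, F b = F 0 + F 1 := by
  have : (Finset.univ : Finset (ZMod 2)) = {0, 1} := by decide
  rw [this, Finset.sum_insert (by decide), Finset.sum_singleton]

private lemma zmod2_sgn_add (x y : ZMod 2) :
    (if x + y = 0 then (1:ℝ) else -1)
      = (if x = 0 then (1:ℝ) else -1) * (if y = 0 then (1:ℝ) else -1) := by
  rcases (by decide : ∀ z : ZMod 2, z = 0 ∨ z = 1) x with rfl | rfl <;>
    rcases (by decide : ∀ z : ZMod 2, z = 0 ∨ z = 1) y with rfl | rfl <;>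
    simp [(by decide : (1:ZMod 2)+1 = 0), (by decide : ¬((1:ZMod 2) = 0))]

private lemma bern_sum (q : ℝ) : ∑ b : ZMod 2, bern q b = 1 := by
  rw [zmod2_sum]
  simp [bern, (by decide : ¬ ((0 : ZMod 2) = 1))]

private lemma sum_prod_pi {ι β : Type*} [Fintype ι] [Fintype β] [DecidableEq ι]
    (q : ι → β → ℝ) :
    ∑ w : ι → β, ∏ i, q i (w i) = ∏ i, ∑ b, q i b := by
  classical
  rw [← Fintype.piFinset_univ, Finset.sum_prod_piFinset]

private def evenProj (k : ℕ) (ω : Fin (2 * k) → ZMod 2) : Fin k → ZMod 2 :=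
  fun j => ω ⟨2 * (j : ℕ), by have := j.2; omega⟩

private lemma glue_evenProj (k : ℕ) (ω : Fin (2 * k) → ZMod 2) (v : Fin k → ZMod 2)
    (h : oddProj k ω = v) : glue k v (evenProj k ω) = ω := by
  funext i
  unfold glue
  by_cases hi : (i : ℕ) % 2 = 1
  · rw [if_pos hi, ← h]
    show ω ⟨2 * ((i:ℕ)/2) + 1, _⟩ = ω i
    congr 1
    apply Fin.ext
    show 2 * ((i:ℕ)/2) + 1 = (i : ℕ)
    omega
  · rw [if_neg hi]
    show ω ⟨2 * ((i:ℕ)/2), _⟩ = ω i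
    congr 1
    apply Fin.ext
    show 2 * ((i:ℕ)/2) = (i : ℕ)
    omega

private lemma fiber_odd (k : ℕ) (p : ℝ) (v : Fin k → ZMod 2)
    {hdec : DecidablePred fun ω => oddProj k ω = v} :
    ∑ ω ∈ @Finset.filter _ _ hdec Finset.univ, srcP k p ω
      = ∏ j, bern p (v j) := by
  classical
  rw [Finset.filter_congr_decidable]
  rw [Finset.sum_nbij' (i := fun ω => evenProj k ω) (j := fun w => glue k v w)
    (t := Finset.univ) (g := fun w => srcP k p (glue k v w))
    (fun ω _ => Finset.mem_univ _)
    (fun w _ => by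
      simp only [Finset.mem_filter, Finset.mem_univ, true_and]
      funext j
      exact glue_odd k v w j)
    (fun ω hω => glue_evenProj k ω v (by
      simpa only [Finset.mem_filter, Finset.mem_univ, true_and] using hω))
    (fun w _ => by
      funext j
      exact glue_even k v w j)
    (fun ω hω => by
      show srcP k p ω = srcP k p (glue k v (evenProj k ω))
      rw [glue_evenProj k ω v (by
        simpa only [Finset.mem_filter, Finset.mem_univ, true_and] using hω)])]
  have : ∀ w : Fin k → ZMod 2, srcP k p (glue k v w)
      = (∏ j, bern p (v j)) * ∏ j, bern (1/2) (w j) := srcP_glue k p v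
  rw [Finset.sum_congr rfl (fun w _ => this w), ← Finset.mul_sum]
  rw [sum_prod_pi (fun _ b => bern (1/2) b)]
  simp [bern_sum]

private lemma fiber_oddG (k : ℕ) (p : ℝ) (G : (Fin k → ZMod 2) → ZMod 2) (b : ZMod 2)
    {hdec : DecidablePred fun ω => G (oddProj k ω) = b}
    {hdec2 : DecidablePred fun v => G v = b} :
    ∑ ω ∈ @Finset.filter _ _ hdec Finset.univ, srcP k p ω
      = ∑ v ∈ @Finset.filter _ _ hdec2 Finset.univ, ∏ j, bern p (v j) := by
  classical
  rw [Finset.filter_congr_decidable, Finset.filter_congr_decidable]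
  rw [← Finset.sum_fiberwise_of_maps_to (g := oddProj k)
    (t := Finset.univ.filter fun v => G v = b)
    (fun ω hω => by
      simp only [Finset.mem_filter, Finset.mem_univ, true_and] at hω ⊢
      exact hω) (srcP k p)]
  apply Finset.sum_congr rfl
  intro v hv
  simp only [Finset.mem_filter, Finset.mem_univ, true_and] at hv
  rw [← fiber_odd k p v (hdec := inferInstance)]
  apply Finset.sum_congr _ (fun _ _ => rfl)
  ext ω
  simp only [Finset.mem_filter, Finset.mem_univ, true_and]
  constructor
  · rintro ⟨-, h⟩; exact h
  · intro h; exact ⟨by rw [h, hv], h⟩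

private lemma bern_pos {p : ℝ} (hp : 0 < p) (hp1 : p < 1) (b : ZMod 2) : 0 < bern p b := by
  unfold bern
  split <;> linarith

private lemma ent_prod (p : ℝ) (hp : 0 < p) (hp1 : p < 1) :
    ∀ n : ℕ, ∑ v : Fin n → ZMod 2,
      -((∏ j, bern p (v j)) * Real.logb 2 (∏ j, bern p (v j))) = n * binH p := by
  intro n
  induction n with
  | zero => simp
  | succ n ih =>
    rw [← Fintype.sum_equiv ((Fin.consEquiv fun _ : Fin (n+1) => ZMod 2))
      (fun x : ZMod 2 × (Fin n → ZMod 2) =>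
        -((∏ j, bern p ((Fin.consEquiv fun _ : Fin (n+1) => ZMod 2) x j)) *
          Real.logb 2 (∏ j, bern p ((Fin.consEquiv fun _ : Fin (n+1) => ZMod 2) x j))))
      _ (fun x => rfl)]
    have hcons : ∀ (b : ZMod 2) (w : Fin n → ZMod 2),
        (∏ j, bern p ((Fin.consEquiv fun _ : Fin (n+1) => ZMod 2) (b, w) j))
          = bern p b * ∏ j, bern p (w j) := by
      intro b w
      rw [Fin.prod_univ_succ]
      simp [Fin.consEquiv]
    rw [Fintype.sum_prod_type]
    have hterm : ∀ (b : ZMod 2) (w : Fin n → ZMod 2),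
        -((∏ j, bern p ((Fin.consEquiv fun _ : Fin (n+1) => ZMod 2) (b, w) j)) *
          Real.logb 2 (∏ j, bern p ((Fin.consEquiv fun _ : Fin (n+1) => ZMod 2) (b, w) j)))
        = bern p b * (-((∏ j, bern p (w j)) * Real.logb 2 (∏ j, bern p (w j))))
          + (∏ j, bern p (w j)) * (-(bern p b * Real.logb 2 (bern p b))) := by
      intro b w
      rw [hcons]
      have h1 : bern p b ≠ 0 := (bern_pos hp hp1 b).ne'
      have h2 : (∏ j, bern p (w j)) ≠ 0 :=
        (Finset.prod_pos fun j _ => bern_pos hp hp1 (w j)).ne'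
      rw [Real.logb_mul h1 h2]
      ring
    calc ∑ b : ZMod 2, ∑ w : Fin n → ZMod 2,
          -((∏ j, bern p ((Fin.consEquiv fun _ : Fin (n+1) => ZMod 2) (b, w) j)) *
            Real.logb 2 (∏ j, bern p ((Fin.consEquiv fun _ : Fin (n+1) => ZMod 2) (b, w) j)))
        = ∑ b : ZMod 2, (bern p b * (n * binH p)
            + 1 * (-(bern p b * Real.logb 2 (bern p b)))) := by
          apply Finset.sum_congr rfl
          intro b _
          rw [Finset.sum_congr rfl (fun w _ => hterm b w), Finset.sum_add_distrib,
            ← Finset.mul_sum, ih, ← Finset.sum_mul,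
            sum_prod_pi (fun _ c => bern p c)]
          simp [bern_sum]
      _ = (n + 1 : ℕ) * binH p := by
          rw [Finset.sum_add_distrib, ← Finset.sum_mul, bern_sum, zmod2_sum]
          have h0 : bern p 0 = 1 - p := by
            unfold bern; rw [if_neg (by decide)]
          have h1 : bern p 1 = p := by unfold bern; rw [if_pos rfl]
          rw [h0, h1]
          unfold binH
          push_cast
          ring

open Classical in
private lemma mapEnt_congr {Ω β γ : Type*} [Fintype Ω] [Fintype β] [Fintype γ]
    (p : Ω → ℝ) (f : Ω → β) (g : Ω → γ) (φ : γ → β)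
    (hf : ∀ ω, f ω = φ (g ω)) (hinj : ∀ ω ω', f ω = f ω' → g ω = g ω') :
    mapEnt p f = mapEnt p g := by
  classical
  unfold mapEnt
  set Pf : β → ℝ := fun b => ∑ ω ∈ Finset.univ.filter (fun ω => f ω = b), p ω with hPf
  set Pg : γ → ℝ := fun c => ∑ ω ∈ Finset.univ.filter (fun ω => g ω = c), p ω with hPg
  have h1 : ∀ b ∈ (Finset.univ : Finset β), b ∉ Finset.image f Finset.univ →
      -((Pf b) * Real.logb 2 (Pf b)) = 0 := by
    intro b _ hb
    have : Finset.univ.filter (fun ω => f ω = b) = ∅ := by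
      apply Finset.filter_eq_empty_iff.2
      intro ω _ h
      exact hb (Finset.mem_image.2 ⟨ω, Finset.mem_univ _, h⟩)
    simp [hPf, this]
  rw [← Finset.sum_subset (Finset.subset_univ (Finset.image f Finset.univ)) h1]
  have himg : Finset.image f Finset.univ = Finset.image φ (Finset.image g Finset.univ) := by
    rw [Finset.image_image]
    exact Finset.image_congr (fun ω _ => hf ω)
  rw [himg]
  have hφinj : Set.InjOn φ (Finset.image g Finset.univ) := by
    intro c hc c' hc' hcc
    obtain ⟨ω, -, rfl⟩ := Finset.mem_image.1 hc
    obtain ⟨ω', -, rfl⟩ := Finset.mem_image.1 hc'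
    exact hinj ω ω' (by rw [hf ω, hf ω', hcc])
  rw [Finset.sum_image hφinj]
  have hfib : ∀ c ∈ Finset.image g Finset.univ, Pf (φ c) = Pg c := by
    intro c hc
    obtain ⟨ω₀, -, rfl⟩ := Finset.mem_image.1 hc
    apply Finset.sum_congr _ (fun _ _ => rfl)
    ext ω
    simp only [Finset.mem_filter, Finset.mem_univ, true_and]
    constructor
    · intro h; exact hinj ω ω₀ (by rw [h, hf ω₀])
    · intro h; rw [hf ω, h]
  rw [Finset.sum_congr rfl (fun c hc => by rw [hfib c hc])]
  apply Finset.sum_subset (Finset.subset_univ _)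
  intro c _ hc
  have : Finset.univ.filter (fun ω => g ω = c) = ∅ := by
    apply Finset.filter_eq_empty_iff.2
    intro ω _ h
    exact hc (Finset.mem_image.2 ⟨ω, Finset.mem_univ _, h⟩)
  simp [hPg, this]

private lemma srcP_sum (k : ℕ) (p : ℝ) : ∑ ω, srcP k p ω = 1 := by
  unfold srcP
  rw [sum_prod_pi (fun (i : Fin (2*k)) (b : ZMod 2) =>
    bern (if (i : ℕ) % 2 = 0 then 1/2 else p) b)]
  rw [Finset.prod_congr rfl (fun i _ => bern_sum _)]
  simp

private lemma mapEnt_oddProj (k : ℕ) (p : ℝ) (hp : 0 < p) (hp1 : p < 1) :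
    mapEnt (srcP k p) (oddProj k) = k * binH p := by
  unfold mapEnt
  rw [Finset.sum_congr rfl (fun v _ => by rw [fiber_odd k p v])]
  exact ent_prod p hp hp1 k

private lemma sum_filter_irrel {α : Type*} [Fintype α] {q : α → Prop}
    {h1 h2 : DecidablePred q} (p : α → ℝ) :
    ∑ ω ∈ @Finset.filter _ _ h1 Finset.univ, p ω
      = ∑ ω ∈ @Finset.filter _ _ h2 Finset.univ, p ω := by
  have : h1 = h2 := funext fun a => Subsingleton.elim _ _
  rw [this]

private lemma mapEnt_zmod {Ω : Type*} [Fintype Ω] (p : Ω → ℝ) (hsum : ∑ ω, p ω = 1)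
    (f : Ω → ZMod 2) {hdec : DecidablePred fun ω => f ω = 1} :
    mapEnt p f = binH (∑ ω ∈ @Finset.filter _ _ hdec Finset.univ, p ω) := by
  classical
  unfold mapEnt
  rw [zmod2_sum]
  have key : ∀ a b : ℝ, a = 1 - b → -(a * Real.logb 2 a) + -(b * Real.logb 2 b) = binH b := by
    intro a b h
    rw [h]
    unfold binH
    ring
  rw [key _ _ ?_, sum_filter_irrel p]
  rw [sum_filter_irrel (q := fun ω => f ω = 0) (h2 := inferInstance) p,
      sum_filter_irrel (q := fun ω => f ω = 1) (h2 := inferInstance) p]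
  have h1 := Finset.sum_fiberwise_of_maps_to (g := f) (t := (Finset.univ : Finset (ZMod 2)))
    (s := (Finset.univ : Finset Ω)) (fun _ _ => Finset.mem_univ _) p
  rw [hsum, zmod2_sum] at h1
  rw [sum_filter_irrel (q := fun i => f i = 0) (h2 := inferInstance) p,
      sum_filter_irrel (q := fun i => f i = 1) (h2 := inferInstance) p] at h1
  linarith

private lemma sgn_sum {ι : Type*} (s : Finset ι) (v : ι → ZMod 2) :
    (if (∑ j ∈ s, v j) = 0 then (1:ℝ) else -1)
      = ∏ j ∈ s, (if v j = 0 then (1:ℝ) else -1) := by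
  classical
  induction s using Finset.induction_on with
  | empty => simp
  | insert _ _ h ih => rw [Finset.sum_insert h, Finset.prod_insert h, zmod2_sgn_add, ih]

private lemma char_sum (k : ℕ) (p : ℝ) :
    ∑ v : Fin k → ZMod 2, (∏ j, bern p (v j)) * (if (∑ j, v j) = 0 then (1:ℝ) else -1)
      = (1 - 2*p)^k := by
  have h1 : ∀ v : Fin k → ZMod 2,
      (∏ j, bern p (v j)) * (if (∑ j, v j) = 0 then (1:ℝ) else -1)
      = ∏ j, (bern p (v j) * if v j = 0 then (1:ℝ) else -1) := by
    intro v
    rw [sgn_sum, ← Finset.prod_mul_distrib]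
  rw [Finset.sum_congr rfl (fun v _ => h1 v),
    sum_prod_pi (fun (_ : Fin k) (b : ZMod 2) => bern p b * if b = 0 then (1:ℝ) else -1)]
  have h2 : ∑ b : ZMod 2, bern p b * (if b = 0 then (1:ℝ) else -1) = 1 - 2*p := by
    rw [zmod2_sum]
    unfold bern
    rw [if_neg (by decide : ¬ ((0:ZMod 2) = 1)), if_pos rfl, if_pos rfl,
      if_neg (by decide : ¬ ((1:ZMod 2) = 0))]
    ring
  rw [Finset.prod_congr rfl (fun _ _ => h2), Finset.prod_const]
  simp

private lemma xor_prob (k : ℕ) (p : ℝ)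
    {hdec : DecidablePred fun v : Fin k → ZMod 2 => (∑ j, v j) = 1} :
    ∑ v ∈ @Finset.filter _ _ hdec Finset.univ, ∏ j, bern p (v j)
      = (1 - (1 - 2*p)^k)/2 := by
  classical
  have htot : ∑ b : ZMod 2, ∑ v ∈ Finset.univ.filter (fun v : Fin k → ZMod 2 => (∑ j, v j) = b),
      ∏ j, bern p (v j) = 1 := by
    rw [Finset.sum_fiberwise_of_maps_to (fun _ _ => Finset.mem_univ _)
      (fun v : Fin k → ZMod 2 => ∏ j, bern p (v j))]
    rw [sum_prod_pi (fun (_ : Fin k) (b : ZMod 2) => bern p b)]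
    simp [bern_sum]
  have hchar : ∑ b : ZMod 2, ∑ v ∈ Finset.univ.filter (fun v : Fin k → ZMod 2 => (∑ j, v j) = b),
      (∏ j, bern p (v j)) * (if (∑ j, v j) = 0 then (1:ℝ) else -1) = (1 - 2*p)^k := by
    rw [Finset.sum_fiberwise_of_maps_to (fun _ _ => Finset.mem_univ _)
      (fun v : Fin k → ZMod 2 => (∏ j, bern p (v j)) * (if (∑ j, v j) = 0 then (1:ℝ) else -1))]
    exact char_sum k p
  rw [zmod2_sum] at htot hchar
  have e0 : ∑ v ∈ Finset.univ.filter (fun v : Fin k → ZMod 2 => (∑ j, v j) = (0 : ZMod 2)),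
      (∏ j, bern p (v j)) * (if (∑ j, v j) = 0 then (1:ℝ) else -1)
      = ∑ v ∈ Finset.univ.filter (fun v : Fin k → ZMod 2 => (∑ j, v j) = (0 : ZMod 2)), ∏ j, bern p (v j) := by
    apply Finset.sum_congr rfl
    intro v hv
    simp only [Finset.mem_filter, Finset.mem_univ, true_and] at hv
    rw [if_pos hv, mul_one]
  have e1 : ∀ {h : DecidablePred fun v : Fin k → ZMod 2 => (∑ j, v j) = (1 : ZMod 2)},
      ∑ v ∈ @Finset.filter _ _ h Finset.univ,
        (∏ j, bern p (v j)) * (if (∑ j, v j) = 0 then (1:ℝ) else -1)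
      = -∑ v ∈ @Finset.filter _ _ h Finset.univ, ∏ j, bern p (v j) := by
    intro h
    rw [← Finset.sum_neg_distrib]
    apply Finset.sum_congr rfl
    intro v hv
    simp only [Finset.mem_filter, Finset.mem_univ, true_and] at hv
    rw [hv, if_neg (by decide : ¬ ((1:ZMod 2) = 0))]
    ring
  rw [e0, e1] at hchar
  have e2 : ∀ b : ZMod 2, b = 1 →
      ∑ v ∈ @Finset.filter _ _ hdec Finset.univ, ∏ j, bern p (v j)
      = ∑ v ∈ Finset.univ.filter (fun v : Fin k → ZMod 2 => (∑ j, v j) = b),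
        ∏ j, bern p (v j) := by
    intro b hb
    subst hb
    exact sum_filter_irrel _
  linarith [htot, hchar, e2 1 rfl]

private lemma sumX_eq (k : ℕ) :
    (fun ω : Fin (2*k) → ZMod 2 => ∑ i : Fin (2*k), Xrv k i ω)
      = ∑ j : Fin k, (fun ω : Fin (2*k) → ZMod 2 => ω ⟨2*(j:ℕ)+1, by have := j.2; omega⟩) := by
  classical
  funext ω
  rw [Finset.sum_apply]
  unfold Xrv
  have step1 : ∀ i : Fin (2*k),
      ∑ j ∈ Finset.univ.filter (fun j : Fin (2*k) => (j:ℕ) ≤ (i:ℕ)), ω j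
      = ∑ j : Fin (2*k), if (j:ℕ) ≤ (i:ℕ) then ω j else 0 := fun i => Finset.sum_filter _ _
  rw [Finset.sum_congr rfl (fun i _ => step1 i), Finset.sum_comm]
  have step2 : ∀ j : Fin (2*k),
      (∑ i : Fin (2*k), if (j:ℕ) ≤ (i:ℕ) then ω j else 0)
      = if (j:ℕ) % 2 = 1 then ω j else 0 := by
    intro j
    have hcard : (Finset.univ.filter (fun i : Fin (2*k) => (j:ℕ) ≤ (i:ℕ))).card
        = 2*k - (j:ℕ) := by
      have : Finset.univ.filter (fun i : Fin (2*k) => (j:ℕ) ≤ (i:ℕ)) = Finset.Ici j := by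
        ext i
        simp only [Finset.mem_filter, Finset.mem_univ, true_and, Finset.mem_Ici, Fin.le_def]
      rw [this, Fin.card_Ici]
    calc (∑ i : Fin (2*k), if (j:ℕ) ≤ (i:ℕ) then ω j else 0)
        = ∑ i ∈ Finset.univ.filter (fun i : Fin (2*k) => (j:ℕ) ≤ (i:ℕ)), ω j :=
          (Finset.sum_filter _ _).symm
      _ = (Finset.univ.filter (fun i : Fin (2*k) => (j:ℕ) ≤ (i:ℕ))).card • ω j :=
          Finset.sum_const _
      _ = ((2*k - (j:ℕ) : ℕ) : ZMod 2) * ω j := by rw [hcard, nsmul_eq_mul]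
      _ = if (j:ℕ) % 2 = 1 then ω j else 0 := by
          by_cases h : (j:ℕ) % 2 = 1
          · rw [if_pos h]
            have hlt := j.isLt
            have h2 : (2*k - (j:ℕ)) % 2 = 1 := by omega
            have hc : ((2*k - (j:ℕ) : ℕ) : ZMod 2) = 1 := by
              rw [← ZMod.natCast_mod, h2, Nat.cast_one]
            rw [hc, one_mul]
          · rw [if_neg h]
            have hlt := j.isLt
            have h2 : (2*k - (j:ℕ)) % 2 = 0 := by omega
            have hc : ((2*k - (j:ℕ) : ℕ) : ZMod 2) = 0 := by
              rw [← ZMod.natCast_mod, h2, Nat.cast_zero]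
            rw [hc, zero_mul]
  rw [Finset.sum_congr rfl (fun j _ => step2 j), ← Finset.sum_filter]
  refine Finset.sum_nbij' (i := fun j : Fin (2*k) => (⟨(j:ℕ)/2, by omega⟩ : Fin k))
    (j := fun j' : Fin k => (⟨2*(j':ℕ)+1, by omega⟩ : Fin (2*k)))
    (fun _ _ => Finset.mem_univ _)
    (fun j' _ => by
      simp only [Finset.mem_filter, Finset.mem_univ, true_and]
      omega)
    (fun j hj => by
      simp only [Finset.mem_filter, Finset.mem_univ, true_and] at hj
      apply Fin.ext
      show 2*((j:ℕ)/2)+1 = (j:ℕ)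
      omega)
    (fun j' _ => by
      apply Fin.ext
      show (2*(j':ℕ)+1)/2 = (j':ℕ)
      omega)
    (fun j hj => by
      simp only [Finset.mem_filter, Finset.mem_univ, true_and] at hj
      congr 1
      apply Fin.ext
      show (j:ℕ) = 2*((j:ℕ)/2)+1
      omega)

private lemma pairX_eq (k : ℕ) (j : Fin k) :
    (fun ω : Fin (2*k) → ZMod 2 =>
        Xrv k ⟨2*(j:ℕ), by have := j.2; omega⟩ ω + Xrv k ⟨2*(j:ℕ)+1, by have := j.2; omega⟩ ω)
      = fun ω : Fin (2*k) → ZMod 2 => ω ⟨2*(j:ℕ)+1, by have := j.2; omega⟩ := by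
  classical
  funext ω
  show (∑ i ∈ Finset.univ.filter (fun i : Fin (2*k) => (i:ℕ) ≤ 2*(j:ℕ)), ω i)
      + (∑ i ∈ Finset.univ.filter (fun i : Fin (2*k) => (i:ℕ) ≤ 2*(j:ℕ)+1), ω i)
      = ω ⟨2*(j:ℕ)+1, by omega⟩
  have hins : Finset.univ.filter (fun i : Fin (2*k) => (i:ℕ) ≤ 2*(j:ℕ)+1)
      = insert (⟨2*(j:ℕ)+1, by omega⟩ : Fin (2*k))
          (Finset.univ.filter (fun i : Fin (2*k) => (i:ℕ) ≤ 2*(j:ℕ))) := by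
    ext i
    simp only [Finset.mem_filter, Finset.mem_insert, Finset.mem_univ, true_and, Fin.ext_iff]
    show (i:ℕ) ≤ 2*(j:ℕ)+1 ↔ (i:ℕ) = 2*(j:ℕ)+1 ∨ (i:ℕ) ≤ 2*(j:ℕ)
    omega
  rw [hins, Finset.sum_insert (by
    simp only [Finset.mem_filter, Finset.mem_univ, true_and]
    show ¬ ((⟨2*(j:ℕ)+1, by omega⟩ : Fin (2*k)) : ℕ) ≤ 2*(j:ℕ)
    show ¬ (2*(j:ℕ)+1 ≤ 2*(j:ℕ))
    omega)]
  have hchar : ∀ a b : ZMod 2, a + (b + a) = b := by decide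
  exact hchar _ _

private lemma odd_det (k : ℕ) (u : (Fin (2*k) → ZMod 2) → ZMod 2)
    (hu : u ∈ Submodule.span (ZMod 2)
      (Set.range fun j : Fin k =>
        (fun ω : Fin (2*k) → ZMod 2 => ω ⟨2*(j:ℕ)+1, by have := j.2; omega⟩)))
    (ω ω' : Fin (2*k) → ZMod 2)
    (h : ∀ j : Fin k, ω ⟨2*(j:ℕ)+1, by have := j.2; omega⟩ = ω' ⟨2*(j:ℕ)+1, by have := j.2; omega⟩) :
    u ω = u ω' := by
  induction hu using Submodule.span_induction with
  | mem x hx =>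
    obtain ⟨j, rfl⟩ := hx
    exact h j
  | zero => rfl
  | add x y hx hy ihx ihy => show x ω + y ω = x ω' + y ω'; rw [ihx, ihy]
  | smul a x hx ihx => show a • x ω = a • x ω'; rw [ihx]

private lemma binH_eq (p : ℝ) : binH p = Real.binEntropy p / Real.log 2 := by
  unfold binH Real.binEntropy Real.logb
  rw [Real.log_inv, Real.log_inv]
  ring

private lemma binH_lt_binH {a b : ℝ} (h0 : 0 ≤ a) (hab : a < b) (hb : b ≤ 1/2) :
    binH a < binH b := by
  rw [binH_eq, binH_eq, div_lt_div_iff_of_pos_right (Real.log_pos (by norm_num))]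
  exact Real.binEntropy_strictMonoOn ⟨h0, by norm_num; linarith⟩
    ⟨by linarith, by norm_num; linarith⟩ hab

private lemma binH_lt_one {p : ℝ} (h : p ≠ 2⁻¹) : binH p < 1 := by
  rw [binH_eq, div_lt_one (Real.log_pos (by norm_num))]
  exact Real.binEntropy_lt_log_two.2 h

private lemma mapEnt_inst {Ω β : Type*} [Fintype Ω] {h1 h2 : Fintype β}
    (p : Ω → ℝ) (f : Ω → β) :
    @mapEnt Ω β _ h1 p f = @mapEnt Ω β _ h2 p f := by
  rw [Subsingleton.elim h1 h2]

private lemma subEnt_odd (k : ℕ) (p : ℝ) (hp : 0 < p) (hp1 : p < 1) :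
    subEnt (srcP k p)
      (Submodule.span (ZMod 2)
        (Set.range fun j : Fin k =>
          (fun ω : Fin (2*k) → ZMod 2 => ω ⟨2*(j:ℕ)+1, by have := j.2; omega⟩)))
      = k * binH p := by
  classical
  set U := Submodule.span (ZMod 2)
      (Set.range fun j : Fin k =>
        (fun ω : Fin (2*k) → ZMod 2 => ω ⟨2*(j:ℕ)+1, by omega⟩)) with hU
  unfold subEnt
  refine Eq.trans (mapEnt_inst (h2 := inferInstance) _ _) ?_
  refine Eq.trans ?_ (mapEnt_oddProj k p hp hp1)
  exact mapEnt_congr (srcP k p)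
    (fun ω => (fun u : U => (u : (Fin (2*k) → ZMod 2) → ZMod 2) ω))
    (oddProj k)
    (fun v => (fun u : U => (u : (Fin (2*k) → ZMod 2) → ZMod 2) (glue k v (fun _ => 0))))
    (fun ω => by
      funext u
      exact odd_det k u u.2 ω (glue k (oddProj k ω) (fun _ => 0))
        (fun j => (glue_odd k (oddProj k ω) (fun _ => 0) j).symm))
    (fun ω ω' hF => by
      funext j
      exact congrFun hF ⟨_, Submodule.subset_span ⟨j, rfl⟩⟩)

/-- For `m = 2k > 2` even binary sources as above: `W = span(X1+...+Xm)` is contained in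
`W^(1) = span(X1+X2, ..., X_{m-1}+X_m) = span(Y2, Y4, ..., Ym)`; the normalized entropy
of `W^(1)` is `H(Y2,...,Ym)/(m/2) = h(p)`; and the selected-subspace sum rate `m·h(p)` is
strictly smaller than both the common-code sum rate `m·H(Y2+Y4+...+Ym)` and the
Slepian-Wolf sum rate `(m/2)(1+h(p))`. -/
theorem stmt_19 (k : ℕ) (hk : 1 < k) (p : ℝ) (hp : 0 < p) (hp2 : p < 1 / 2) :
    Submodule.span (ZMod 2) {fun ω : Fin (2 * k) → ZMod 2 => ∑ i : Fin (2 * k), Xrv k i ω}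
        ≤ Submodule.span (ZMod 2)
            (Set.range fun j : Fin k =>
              (fun ω : Fin (2 * k) → ZMod 2 => ω ⟨2 * (j : ℕ) + 1, by omega⟩)) ∧
      Submodule.span (ZMod 2)
          (Set.range fun j : Fin k =>
            (fun ω : Fin (2 * k) → ZMod 2 =>
              Xrv k ⟨2 * (j : ℕ), by omega⟩ ω + Xrv k ⟨2 * (j : ℕ) + 1, by omega⟩ ω))
        = Submodule.span (ZMod 2)
            (Set.range fun j : Fin k =>
              (fun ω : Fin (2 * k) → ZMod 2 => ω ⟨2 * (j : ℕ) + 1, by omega⟩)) ∧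
      subEnt (srcP k p)
          (Submodule.span (ZMod 2)
            (Set.range fun j : Fin k =>
              (fun ω : Fin (2 * k) → ZMod 2 => ω ⟨2 * (j : ℕ) + 1, by omega⟩))) / (k : ℝ)
        = binH p ∧
      (2 * k : ℝ) * binH p
        < (2 * k : ℝ) *
            mapEnt (srcP k p)
              (fun ω : Fin (2 * k) → ZMod 2 => ∑ j : Fin k, ω ⟨2 * (j : ℕ) + 1, by omega⟩) ∧
      (2 * k : ℝ) * binH p < (k : ℝ) * (1 + binH p) := by
  have hp1 : p < 1 := lt_trans hp2 (by norm_num)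
  have hk0 : (0:ℝ) < (k:ℝ) := by positivity
  refine ⟨?_, ?_, ?_, ?_, ?_⟩
  · rw [Submodule.span_le, Set.singleton_subset_iff, sumX_eq k]
    exact Submodule.sum_mem _ (fun j _ => Submodule.subset_span ⟨j, rfl⟩)
  · have he : (fun j : Fin k =>
        (fun ω : Fin (2 * k) → ZMod 2 =>
          Xrv k ⟨2 * (j : ℕ), by omega⟩ ω + Xrv k ⟨2 * (j : ℕ) + 1, by omega⟩ ω))
        = (fun j : Fin k =>
          (fun ω : Fin (2 * k) → ZMod 2 => ω ⟨2 * (j : ℕ) + 1, by omega⟩)) :=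
      funext fun j => pairX_eq k j
    rw [he]
  · rw [subEnt_odd k p hp hp1, mul_comm, mul_div_assoc, div_self (ne_of_gt hk0), mul_one]
  · have hxf : (fun ω : Fin (2 * k) → ZMod 2 =>
        ∑ j : Fin k, ω ⟨2 * (j : ℕ) + 1, by omega⟩)
        = fun ω => ∑ j : Fin k, oddProj k ω j := rfl
    rw [hxf, mapEnt_zmod (srcP k p) (srcP_sum k p)
        (fun ω => ∑ j : Fin k, oddProj k ω j) (hdec := inferInstance),
      fiber_oddG k p (fun v => ∑ j, v j) 1 (hdec2 := inferInstance), xor_prob k p]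
    set x : ℝ := 1 - 2*p with hx
    have hx0 : 0 < x := by rw [hx]; linarith
    have hx1 : x < 1 := by rw [hx]; linarith
    have hxk : x^k < x := by
      calc x^k < x^1 := pow_lt_pow_right_of_lt_one₀ hx0 hx1 hk
        _ = x := pow_one x
    have hxkpos : 0 < x^k := pow_pos hx0 k
    have hq : p < (1 - x^k)/2 := by rw [hx] at hxk ⊢; linarith
    have hq2 : (1 - x^k)/2 ≤ 1/2 := by linarith
    have := binH_lt_binH (le_of_lt hp) hq hq2
    have h2k : (0:ℝ) < 2*(k:ℝ) := by linarith
    calc (2 * (k:ℕ) : ℝ) * binH p = 2*(k:ℝ) * binH p := by push_cast; ring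
      _ < 2*(k:ℝ) * binH ((1 - x^k)/2) := by
        exact mul_lt_mul_of_pos_left this h2k
      _ = (2 * (k:ℕ) : ℝ) * binH ((1 - (1-2*p)^k)/2) := by rw [hx]
  · have hb1 : binH p < 1 := binH_lt_one (by
      intro h
      rw [h] at hp2
      norm_num at hp2)
    have := mul_lt_mul_of_pos_left hb1 hk0
    push_cast
    linarith
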